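/- Let ∗ be a topological quandle structure on the closed unit interval [0,1] (so ∗ is continuous, x ∗ x = x for all x, (x ∗ y) ∗ z = (x ∗ z) ∗ (y ∗ z) for all x, y, z, and each right translation R_x : y ↦ y ∗ x is a homeomorphism of [0,1]). Suppose in addition that the operation is polynomial: there is a real polynomial P(x,y) in two variables with x ∗ y = P(x,y) for all x, y ∈ [0,1]. Then ∗ is the trivial quandle operation: x ∗ y = x for all x, y ∈ [0,1]. -/

import Mathlib

open Polynomial

noncomputable section

namespace PQT

/-- Evaluate a bivariate polynomial: outer variable ↦ x, inner variable ↦ y. -/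
def E (p : Polynomial (Polynomial ℝ)) (x y : ℝ) : ℝ := (p.map (evalRingHom y)).eval x

lemma infinite_Icc : (Set.Icc (0:ℝ) 1).Infinite := Set.Icc_infinite zero_lt_one

lemma poly_eq_of_Icc {A B : ℝ[X]} (h : ∀ x ∈ Set.Icc (0:ℝ) 1, A.eval x = B.eval x) : A = B :=
  A.eq_of_infinite_eval_eq B (infinite_Icc.mono (fun x hx => h x hx))

lemma coeff_comp_sum (A B : ℝ[X]) (M : ℕ) (hA : A.natDegree ≤ M) (N : ℕ) :
    (A.comp B).coeff N = ∑ i ∈ Finset.range (M+1), A.coeff i * (B^i).coeff N := by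
  rw [comp_eq_sum_left, Polynomial.sum_def, finset_sum_coeff]
  have h1 : ∀ i, (C (A.coeff i) * B ^ i).coeff N = A.coeff i * (B^i).coeff N :=
    fun i => coeff_C_mul _
  simp_rw [h1]
  exact Finset.sum_subset (supp_subset_range (Nat.lt_succ_of_le hA))
    (fun i _ hi => by rw [notMem_support_iff.mp hi, zero_mul])

lemma coeff_comp_top (A B : ℝ[X]) (l : ℕ) (hA : A.natDegree ≤ l+1) (hB : B.natDegree ≤ l+1) :
    (A.comp B).coeff ((l+1)*(l+1)) = A.coeff (l+1) * (B.coeff (l+1))^(l+1) := by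
  rw [coeff_comp_sum A B (l+1) hA, Finset.sum_range_succ]
  have hz : ∀ i ∈ Finset.range (l+1), A.coeff i * (B^i).coeff ((l+1)*(l+1)) = 0 := by
    intro i hi
    have hi' : i < l + 1 := Finset.mem_range.mp hi
    have hd : (B^i).natDegree < (l+1)*(l+1) := by
      refine lt_of_le_of_lt (natDegree_pow_le_of_le i hB) ?_
      exact Nat.mul_lt_mul_of_lt_of_le hi' le_rfl (Nat.succ_pos l)
    rw [coeff_eq_zero_of_natDegree_lt hd, mul_zero]
  rw [Finset.sum_eq_zero hz, zero_add, coeff_pow_of_natDegree_le hB]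

lemma coeff_comp_N (A B : ℝ[X]) (l j : ℕ) (hA : A.natDegree ≤ l+2) (hB : B.natDegree ≤ l+2) :
    (A.comp B).coeff ((l+2)*(l+1)+j)
      = A.coeff (l+1) * ((B^(l+1)).coeff ((l+2)*(l+1)+j))
        + A.coeff (l+2) * ((B^(l+2)).coeff ((l+2)*(l+1)+j)) := by
  rw [coeff_comp_sum A B (l+2) hA]
  rw [show l+2+1 = l+1+1+1 from rfl, Finset.sum_range_succ, Finset.sum_range_succ]
  have hz : ∀ i ∈ Finset.range (l+1), A.coeff i * (B^i).coeff ((l+2)*(l+1)+j) = 0 := by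
    intro i hi
    have hi' : i ≤ l := Nat.lt_succ_iff.mp (Finset.mem_range.mp hi)
    have hd : (B^i).natDegree < (l+2)*(l+1)+j := by
      refine lt_of_le_of_lt (natDegree_pow_le_of_le i hB) ?_
      have h1 : i * (l+2) ≤ l * (l+2) := Nat.mul_le_mul_right _ hi'
      have h2 : l * (l+2) < (l+2)*(l+1) := by nlinarith
      omega
    rw [coeff_eq_zero_of_natDegree_lt hd, mul_zero]
  rw [Finset.sum_eq_zero hz, zero_add]

lemma coeff_pow_sub (B₁ B₂ : ℝ[X]) (l j : ℕ) (hj : j ≤ l)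
    (h₁ : B₁.natDegree ≤ l+1) (h₂ : B₂.natDegree ≤ l+1)
    (hhi : ∀ i, j < i → B₁.coeff i = B₂.coeff i) :
    (B₁^(l+1)).coeff ((l+1)*l+j)
      = (B₂^(l+1)).coeff ((l+1)*l+j)
        + (l+1) * (B₂.coeff (l+1))^l * (B₁.coeff j - B₂.coeff j) := by
  set L : ℝ[X] := B₁ - B₂ with hLdef
  have hL : L.natDegree ≤ j := by
    refine natDegree_le_iff_coeff_eq_zero.mpr (fun i hji => ?_)
    rw [hLdef, coeff_sub, hhi i hji, sub_self]
  have hB1 : B₁ = B₂ + L := by rw [hLdef]; ring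
  rw [hB1, add_pow]
  rw [finset_sum_coeff]
  rw [show l+1+1 = l+1+1 from rfl, Finset.sum_range_succ, Finset.sum_range_succ]
  have hz : ∀ k ∈ Finset.range l,
      (B₂ ^ k * L ^ (l + 1 - k) * (((l+1).choose k : ℕ) : ℝ[X])).coeff ((l+1)*l+j) = 0 := by
    intro k hk
    have hk' : k < l := Finset.mem_range.mp hk
    obtain ⟨d, hd⟩ := Nat.exists_eq_add_of_lt hk'
    -- l = k + d + 1
    have hsub : l + 1 - k = d + 2 := by omega
    refine coeff_eq_zero_of_natDegree_lt ?_
    have hdeg : (B₂ ^ k * L ^ (l + 1 - k) * (((l+1).choose k : ℕ) : ℝ[X])).natDegree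
        ≤ k * (l+1) + (d+2) * j := by
      refine le_trans natDegree_mul_le ?_
      have hnat : ((((l+1).choose k : ℕ)) : ℝ[X]).natDegree = 0 := natDegree_natCast _
      rw [hnat, add_zero]
      refine le_trans natDegree_mul_le ?_
      exact Nat.add_le_add (natDegree_pow_le_of_le k h₂)
        (by rw [hsub]; exact natDegree_pow_le_of_le _ hL)
    refine lt_of_le_of_lt hdeg ?_
    -- k * (l+1) + (d+2)*j < (l+1)*l + j  with l = k+d+1, j ≤ l
    have h3 : (d+1) * j < (d+1) * (l+1) := by nlinarith
    nlinarith [hd, hj]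
  rw [Finset.sum_eq_zero hz, zero_add]
  have hterm1 : (B₂ ^ (l+1) * L ^ (l + 1 - (l+1)) * (((l+1).choose (l+1) : ℕ) : ℝ[X]))
      = B₂ ^ (l+1) := by
    simp
  have hterm2 : (B₂ ^ l * L ^ (l + 1 - l) * (((l+1).choose l : ℕ) : ℝ[X])).coeff ((l+1)*l+j)
      = (l+1) * (B₂.coeff (l+1))^l * (B₁.coeff j - B₂.coeff j) := by
    have hch : (l+1).choose l = l+1 := Nat.choose_succ_self_right l
    have hsub : l + 1 - l = 1 := by omega
    rw [hsub, pow_one, hch]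
    have hre : B₂ ^ l * L * (((l+1 : ℕ)) : ℝ[X]) = C ((l+1 : ℕ) : ℝ) * (B₂ ^ l * L) := by
      have hc : (((l+1 : ℕ)) : ℝ[X]) = C (((l+1 : ℕ)) : ℝ) := (Polynomial.C_eq_natCast _).symm
      rw [hc]; ring
    rw [hre, coeff_C_mul]
    have hmul : (B₂ ^ l * L).coeff ((l+1)*l + j)
        = (B₂^l).coeff ((l+1)*l) * L.coeff j := by
      have hpl : (B₂^l).natDegree ≤ (l+1)*l := by
        rw [mul_comm]; exact natDegree_pow_le_of_le l h₂
      exact coeff_mul_add_eq_of_natDegree_le hpl hL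
    rw [hmul]
    have hpow : (B₂^l).coeff ((l+1)*l) = (B₂.coeff (l+1))^l := by
      rw [mul_comm]
      exact coeff_pow_of_natDegree_le h₂
    rw [hpow, hLdef, coeff_sub]
    push_cast
    ring
  rw [hterm1, hterm2, coeff_add, hLdef, coeff_sub]
  ring

lemma eval_evalC (p : Polynomial (Polynomial ℝ)) (y z : ℝ) :
    (p.eval (C y)).eval z = E p y z := by
  have h : (evalRingHom z).comp (evalRingHom (C y : Polynomial ℝ)) =
         (evalRingHom y).comp (mapRingHom (evalRingHom z)) := by
    apply ringHom_ext
    · intro a; simp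
    · simp
  have h2 := RingHom.congr_fun h p
  simpa [E] using h2

theorem exists_affine (p : Polynomial (Polynomial ℝ))
    (hdiag : ∀ x ∈ Set.Icc (0:ℝ) 1, E p x x = x)
    (hcomp : ∀ y ∈ Set.Icc (0:ℝ) 1, ∀ z ∈ Set.Icc (0:ℝ) 1,
      (p.map (evalRingHom z)).comp (p.map (evalRingHom y))
        = (p.map (evalRingHom (E p y z))).comp (p.map (evalRingHom z))) :
    ∃ t : ℝ, ∀ x ∈ Set.Icc (0:ℝ) 1, ∀ y ∈ Set.Icc (0:ℝ) 1, E p x y = t*x + (1-t)*y := by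
  classical
  set q : ℝ → ℝ[X] := fun y => p.map (evalRingHom y) with hqdef
  have hqdeg : ∀ y, (q y).natDegree ≤ p.natDegree := fun y => natDegree_map_le
  have hqcoeff : ∀ y i, (q y).coeff i = (p.coeff i).eval y := fun y i => coeff_map _ _
  have hE : ∀ x y : ℝ, E p x y = (q y).eval x := fun x y => rfl
  by_cases hm0 : p.natDegree = 0
  · -- degree 0 case : E p x y = y
    have hq : ∀ x y : ℝ, E p x y = (p.coeff 0).eval y := by
      intro x y
      have hd : (q y).natDegree = 0 := le_antisymm (hm0 ▸ hqdeg y) (Nat.zero_le _)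
      rw [hE, eq_C_of_natDegree_eq_zero hd, eval_C, hqcoeff]
    have hc0 : p.coeff 0 = (X : ℝ[X]) := by
      apply poly_eq_of_Icc
      intro x hx
      have h := hdiag x hx
      rw [hq x x] at h
      simpa using h
    refine ⟨0, fun x hx y hy => ?_⟩
    rw [hq x y, hc0]; simp
  -- now degree ≥ 1
  have hm1 : 1 ≤ p.natDegree := Nat.one_le_iff_ne_zero.mpr hm0
  have pnz : p ≠ 0 := by
    intro h
    have h1 := hdiag 1 (by constructor <;> norm_num)
    rw [h] at h1
    simp [E] at h1
  have cmnz : p.coeff p.natDegree ≠ 0 := by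
    rw [← leadingCoeff]
    exact leadingCoeff_ne_zero.mpr pnz
  -- constancy of the top coefficient
  have hcm : ∃ μ : ℝ, p.coeff p.natDegree = C μ := by
    by_cases he : (p.coeff p.natDegree).natDegree = 0
    · exact ⟨(p.coeff p.natDegree).coeff 0, eq_C_of_natDegree_eq_zero he⟩
    exfalso
    have he1 : 1 ≤ (p.coeff p.natDegree).natDegree := Nat.one_le_iff_ne_zero.mpr he
    obtain ⟨l, hl⟩ : ∃ l, p.natDegree = l + 1 := ⟨p.natDegree - 1, by omega⟩
    set cm : ℝ[X] := p.coeff p.natDegree with hcmdef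
    set S : Set ℝ := Set.Icc (0:ℝ) 1 \ {x | cm.IsRoot x} with hSdef
    have hSinf : S.Infinite := infinite_Icc.diff (finite_setOf_isRoot cmnz)
    -- pointwise top coefficient relation
    have htop : ∀ y ∈ Set.Icc (0:ℝ) 1, ∀ z ∈ Set.Icc (0:ℝ) 1,
        cm.eval z * (cm.eval y)^(l+1) = cm.eval (E p y z) * (cm.eval z)^(l+1) := by
      intro y hy z hz
      have hEq := congrArg (fun r : ℝ[X] => r.coeff ((l+1)*(l+1))) (hcomp y hy z hz)
      rw [coeff_comp_top (q z) (q y) l (hl ▸ hqdeg z) (hl ▸ hqdeg y),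
          coeff_comp_top (q (E p y z)) (q z) l (hl ▸ hqdeg _) (hl ▸ hqdeg z)] at hEq
      have hc : p.coeff (l+1) = cm := by rw [hcmdef, hl]
      rw [hqcoeff, hqcoeff, hqcoeff, hc] at hEq
      exact hEq
    -- the degree equation for each good point
    have hk : ∀ y₀ ∈ S,
        cm.natDegree = cm.natDegree * (p.eval (C y₀)).natDegree
          + p.natDegree * cm.natDegree := by
      intro y₀ hy₀
      have hy₀I : y₀ ∈ Set.Icc (0:ℝ) 1 := hy₀.1
      have hy₀nz : cm.eval y₀ ≠ 0 := hy₀.2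
      set r : ℝ[X] := p.eval (C y₀) with hrdef
      have hr : ∀ z, r.eval z = E p y₀ z := fun z => eval_evalC p y₀ z
      have key : C ((cm.eval y₀)^(l+1)) * cm = (cm.comp r) * cm^(l+1) := by
        apply poly_eq_of_Icc
        intro z hz
        rw [eval_mul, eval_C, eval_mul, eval_comp, eval_pow, hr]
        rw [mul_comm ((cm.eval y₀)^(l+1)) _]
        exact hl ▸ htop y₀ hy₀I z hz
      have compnz : cm.comp r ≠ 0 := by
        intro h
        have h2 : (cm.comp r).eval y₀ = cm.eval y₀ := by
          rw [eval_comp, hr, hdiag y₀ hy₀I]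
        rw [h] at h2
        simp at h2
        exact hy₀nz h2.symm
      have hA1 : (C ((cm.eval y₀)^(l+1)) * cm).natDegree = cm.natDegree :=
        natDegree_C_mul (pow_ne_zero _ hy₀nz)
      have hA2 : ((cm.comp r) * cm^(l+1)).natDegree
          = cm.natDegree * r.natDegree + (l+1) * cm.natDegree := by
        rw [natDegree_mul compnz (pow_ne_zero _ cmnz), natDegree_comp, natDegree_pow]
      have h9 : (C ((cm.eval y₀)^(l+1)) * cm).natDegree = ((cm.comp r) * cm^(l+1)).natDegree := by
        rw [key]
      have h10 := hA1.symm.trans (h9.trans hA2)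
      rw [hl]
      exact h10
    by_cases hm2 : 2 ≤ p.natDegree
    · obtain ⟨y₀, hy₀⟩ := hSinf.nonempty
      have h4 := hk y₀ hy₀
      have h5 : p.natDegree * cm.natDegree ≤ cm.natDegree := by
        conv_rhs => rw [h4]
        exact Nat.le_add_left _ _
      have h6 : 2 * cm.natDegree ≤ p.natDegree * cm.natDegree := Nat.mul_le_mul_right _ hm2
      generalize hgen : p.natDegree * cm.natDegree = t at h5 h6
      omega
    · -- p.natDegree = 1
      have hmeq : p.natDegree = 1 := by omega
      obtain ⟨y₀, hy₀, y₁, hy₁, hne⟩ := hSinf.nontrivial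
      have hk0 : ∀ u ∈ S, (p.eval (C u)).natDegree = 0 := by
        intro u hu
        have h4 := hk u hu
        rw [hmeq, one_mul] at h4
        have h5 : cm.natDegree * (p.eval (C u)).natDegree = 0 := by
          generalize hg : cm.natDegree * (p.eval (C u)).natDegree = B at h4 ⊢
          omega
        rcases Nat.mul_eq_zero.mp h5 with h | h
        · omega
        · exact h
      have heval : ∀ u : ℝ, p.eval (C u) = p.coeff 0 + p.coeff 1 * C u := by
        intro u
        rw [eval_eq_sum_range' (n := 2) (by omega) (C u)]
        simp [Finset.sum_range_succ]
      have hdiff : p.eval (C y₀) - p.eval (C y₁) = p.coeff 1 * C (y₀ - y₁) := by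
        rw [heval y₀, heval y₁, C_sub]; ring
      have hdeg1 : (p.coeff 1 * C (y₀ - y₁)).natDegree = cm.natDegree := by
        rw [natDegree_mul_C (sub_ne_zero.mpr hne), hcmdef, hmeq]
      have hdeg2 : (p.eval (C y₀) - p.eval (C y₁)).natDegree ≤ 0 := by
        refine le_trans (natDegree_sub_le _ _) ?_
        rw [hk0 y₀ hy₀, hk0 y₁ hy₁]
        omega
      rw [hdiff, hdeg1] at hdeg2
      omega
  obtain ⟨μ, hcmC⟩ := hcm
  have hμ : μ ≠ 0 := by
    intro h
    rw [h, C_0] at hcmC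
    exact cmnz hcmC
  by_cases hm2 : 2 ≤ p.natDegree
  · -- cascade: every coefficient is constant
    have key : ∀ j, j + 1 ≤ p.natDegree → (∀ i, j < i → ∃ a, p.coeff i = C a) →
        ∃ a, p.coeff j = C a := by
      intro j hj hhi
      obtain ⟨l, hl⟩ : ∃ l, p.natDegree = l + 2 := ⟨p.natDegree - 2, by omega⟩
      have hjl : j ≤ l + 1 := by omega
      have hcoeffm : p.coeff (l+2) = C μ := by rw [← hl]; exact hcmC
      have hq2 : ∀ u : ℝ, (q u).coeff (l+2) = μ := by
        intro u; rw [hqcoeff, hcoeffm, eval_C]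
      have hpt : ∀ y ∈ Set.Icc (0:ℝ) 1, ∀ z ∈ Set.Icc (0:ℝ) 1,
          (p.coeff j).eval y = (p.coeff j).eval z := by
        intro y hy z hz
        set w : ℝ := E p y z with hwdef
        have hEq := congrArg (fun r : ℝ[X] => r.coeff ((l+2)*(l+1)+j)) (hcomp y hy z hz)
        rw [coeff_comp_N (q z) (q y) l j (hl ▸ hqdeg z) (hl ▸ hqdeg y),
            coeff_comp_N (q w) (q z) l j (hl ▸ hqdeg w) (hl ▸ hqdeg z)] at hEq
        have hfirst : (q z).coeff (l+1) * ((q y)^(l+1)).coeff ((l+2)*(l+1)+j)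
            = (q w).coeff (l+1) * ((q z)^(l+1)).coeff ((l+2)*(l+1)+j) := by
          by_cases hj0 : j = 0
          · subst hj0
            obtain ⟨a, ha⟩ := hhi (l+1) (by omega)
            have hpow : ∀ u : ℝ, ((q u)^(l+1)).coeff ((l+2)*(l+1)+0) = μ^(l+1) := by
              intro u
              rw [add_zero, mul_comm (l+2) (l+1), coeff_pow_of_natDegree_le (hl ▸ hqdeg u)]
              rw [hq2 u]
            rw [hpow y, hpow z, hqcoeff, hqcoeff, ha, eval_C, eval_C]
          · have hj1 : 1 ≤ j := by omega
            have hzero : ∀ u : ℝ, ((q u)^(l+1)).coeff ((l+2)*(l+1)+j) = 0 := by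
              intro u
              refine coeff_eq_zero_of_natDegree_lt ?_
              refine lt_of_le_of_lt (natDegree_pow_le_of_le (l+1) (hl ▸ hqdeg u)) ?_
              have : (l+1)*(l+2) = (l+2)*(l+1) := by ring
              omega
            rw [hzero y, hzero z, mul_zero, mul_zero]
        rw [hfirst, hq2 z, hq2 w] at hEq
        have hcancel : ((q y)^(l+2)).coeff ((l+2)*(l+1)+j)
            = ((q z)^(l+2)).coeff ((l+2)*(l+1)+j) := by
          have := add_left_cancel hEq
          exact mul_left_cancel₀ hμ this
        have hsub := coeff_pow_sub (q y) (q z) (l+1) j hjl (hl ▸ hqdeg y) (hl ▸ hqdeg z)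
          (fun i hi => by
            obtain ⟨a, ha⟩ := hhi i hi
            rw [hqcoeff, hqcoeff, ha, eval_C, eval_C])
        have hee : l+1+1 = l+2 := by omega
        simp only [hee] at hsub
        rw [hcancel, hq2 z] at hsub
        have hfac : ((↑(l+1):ℝ)+1) * μ^(l+1) * ((q y).coeff j - (q z).coeff j) = 0 := by
          linarith [hsub]
        have hne1 : ((↑(l+1):ℝ)+1) * μ^(l+1) ≠ 0 :=
          mul_ne_zero (by positivity) (pow_ne_zero _ hμ)
        have hz0 := (mul_eq_zero.mp hfac).resolve_left hne1
        have h7 : (q y).coeff j = (q z).coeff j := by linarith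
        rw [hqcoeff, hqcoeff] at h7
        exact h7
      refine ⟨(p.coeff j).eval 0, poly_eq_of_Icc (fun x hx => ?_)⟩
      rw [eval_C]
      exact hpt x hx 0 (by constructor <;> norm_num)
    have hall : ∀ d j, p.natDegree ≤ j + d → ∃ a, p.coeff j = C a := by
      intro d
      induction d with
      | zero =>
        intro j hj
        rcases Nat.lt_or_ge p.natDegree j with h | h
        · exact ⟨0, by rw [coeff_eq_zero_of_natDegree_lt h, C_0]⟩
        · have : j = p.natDegree := by omega
          exact ⟨μ, this ▸ hcmC⟩
      | succ d ih =>
        intro j hj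
        by_cases h : p.natDegree ≤ j + d
        · exact ih j h
        · have hj1 : j + 1 ≤ p.natDegree := by omega
          exact key j hj1 (fun i hi => ih i (by omega))
    have hqq : ∀ y x : ℝ, q y = q x := by
      intro y x
      ext i
      obtain ⟨a, ha⟩ := hall p.natDegree i (Nat.le_add_left _ _)
      rw [hqcoeff, hqcoeff, ha, eval_C, eval_C]
    refine ⟨1, fun x hx y hy => ?_⟩
    rw [hE, hqq y x, ← hE, hdiag x hx]
    ring
  · -- degree exactly 1 : affine
    have hmeq : p.natDegree = 1 := by omega
    have hc1 : p.coeff 1 = C μ := by rw [← hmeq]; exact hcmC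
    have hESum : ∀ x y : ℝ, E p x y = (p.coeff 0).eval y + μ * x := by
      intro x y
      have hdq : (q y).natDegree < 2 := lt_of_le_of_lt (hqdeg y) (by omega)
      rw [hE, eval_eq_sum_range' hdq x]
      simp [Finset.sum_range_succ, hqcoeff, hc1]
    have hc0 : p.coeff 0 = C (1-μ) * X := by
      apply poly_eq_of_Icc
      intro x hx
      have h := hdiag x hx
      rw [hESum x x] at h
      simp only [eval_mul, eval_C, eval_X]
      linarith
    refine ⟨μ, fun x hx y hy => ?_⟩
    rw [hESum, hc0]
    simp only [eval_mul, eval_C, eval_X]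
    ring

def Phi : MvPolynomial (Fin 2) ℝ →+* Polynomial (Polynomial ℝ) :=
  MvPolynomial.eval₂Hom ((C : (Polynomial ℝ) →+* Polynomial (Polynomial ℝ)).comp
    (C : ℝ →+* Polynomial ℝ))
    (fun i => if i = 0 then Polynomial.X else Polynomial.C Polynomial.X)

def Ehom (x y : ℝ) : Polynomial (Polynomial ℝ) →+* ℝ :=
  (evalRingHom x).comp (mapRingHom (evalRingHom y))

lemma Ehom_apply (p : Polynomial (Polynomial ℝ)) (x y : ℝ) : Ehom x y p = E p x y := rfl

lemma E_Phi (P : MvPolynomial (Fin 2) ℝ) (x y : ℝ) :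
    E (Phi P) x y = MvPolynomial.eval ![x, y] P := by
  rw [← Ehom_apply]
  induction P using MvPolynomial.induction_on with
  | C a => simp [Phi, Ehom, E]
  | add f g hf hg => simp only [map_add, hf, hg]
  | mul_X f i hf =>
    have hXi : Ehom x y (Phi (MvPolynomial.X i)) = ![x, y] i := by
      fin_cases i
      · have h0 : Phi (MvPolynomial.X (0 : Fin 2)) = Polynomial.X := by simp [Phi]
        simpa [Ehom, E] using congrArg (Ehom x y) h0
      · have h1 : Phi (MvPolynomial.X (1 : Fin 2)) = Polynomial.C Polynomial.X := by simp [Phi]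
        simpa [Ehom, E] using congrArg (Ehom x y) h1
    rw [map_mul, map_mul, hf, hXi, map_mul, MvPolynomial.eval_X]


end PQT

end

/-- If a topological quandle structure `∗` on the closed unit interval `[0,1]` is given
by a real polynomial in two variables, then it is the trivial quandle operation
`x ∗ y = x`. -/
theorem unitInterval_polynomial_quandle_trivial
    (op : unitInterval → unitInterval → unitInterval)
    (hcont : Continuous fun p : unitInterval × unitInterval => op p.1 p.2)
    (hidem : ∀ x, op x x = x)
    (hdist : ∀ x y z, op (op x y) z = op (op x z) (op y z))
    (hR : ∀ x : unitInterval, ∃ e : unitInterval ≃ₜ unitInterval, ∀ y, e y = op y x)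
    (P : MvPolynomial (Fin 2) ℝ)
    (hP : ∀ x y : unitInterval, (op x y : ℝ) = MvPolynomial.eval ![(x : ℝ), (y : ℝ)] P) :
    ∀ x y : unitInterval, op x y = x := by
  classical
  set p := PQT.Phi P with hpdef
  have hrepr : ∀ x y : ℝ, PQT.E p x y = MvPolynomial.eval ![x, y] P :=
    fun x y => PQT.E_Phi P x y
  have hPE : ∀ x y : unitInterval, (op x y : ℝ) = PQT.E p x y := by
    intro x y
    rw [hrepr]
    exact hP x y
  have hdiag : ∀ x ∈ Set.Icc (0:ℝ) 1, PQT.E p x x = x := by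
    intro x hx
    have h := hPE ⟨x, hx⟩ ⟨x, hx⟩
    rw [hidem ⟨x, hx⟩] at h
    exact h.symm
  have hcomp : ∀ y ∈ Set.Icc (0:ℝ) 1, ∀ z ∈ Set.Icc (0:ℝ) 1,
      (p.map (Polynomial.evalRingHom z)).comp (p.map (Polynomial.evalRingHom y))
        = (p.map (Polynomial.evalRingHom (PQT.E p y z))).comp
            (p.map (Polynomial.evalRingHom z)) := by
    intro y hy z hz
    set Y : unitInterval := ⟨y, hy⟩
    set Z : unitInterval := ⟨z, hz⟩
    have hw : PQT.E p y z = ((op Y Z : unitInterval) : ℝ) := (hPE Y Z).symm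
    apply PQT.poly_eq_of_Icc
    intro x hx
    set Xx : unitInterval := ⟨x, hx⟩
    have L : Polynomial.eval x
          ((p.map (Polynomial.evalRingHom z)).comp (p.map (Polynomial.evalRingHom y)))
        = ((op (op Xx Y) Z : unitInterval) : ℝ) := by
      rw [Polynomial.eval_comp]
      have h1 : Polynomial.eval x (p.map (Polynomial.evalRingHom y))
          = ((op Xx Y : unitInterval) : ℝ) := (hPE Xx Y).symm
      rw [h1]
      exact (hPE (op Xx Y) Z).symm
    have R : Polynomial.eval x
          ((p.map (Polynomial.evalRingHom (PQT.E p y z))).comp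
            (p.map (Polynomial.evalRingHom z)))
        = ((op (op Xx Z) (op Y Z) : unitInterval) : ℝ) := by
      rw [hw, Polynomial.eval_comp]
      have h2 : Polynomial.eval x (p.map (Polynomial.evalRingHom z))
          = ((op Xx Z : unitInterval) : ℝ) := (hPE Xx Z).symm
      rw [h2]
      exact (hPE (op Xx Z) (op Y Z)).symm
    rw [L, R, hdist]
  obtain ⟨t, ht⟩ := PQT.exists_affine p hdiag hcomp
  have haff : ∀ x y : unitInterval, (op x y : ℝ) = t * x + (1-t) * y := by
    intro x y
    rw [hPE x y]
    exact ht x x.2 y y.2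
  -- t = 1 using the homeomorphism (surjectivity) and the range constraint
  obtain ⟨e, he⟩ := hR 0
  obtain ⟨b, hb⟩ := e.surjective 1
  have hob : op b 0 = 1 := (he b).symm.trans hb
  have h2 := haff b 0
  rw [hob] at h2
  rw [Set.Icc.coe_one, Set.Icc.coe_zero] at h2
  have h1 : t * (b : ℝ) = 1 := by linarith
  have hb0 : (0:ℝ) ≤ b := b.2.1
  have hb1 : (b:ℝ) ≤ 1 := b.2.2
  have ht0 : 0 < t := by
    by_contra hcon
    push_neg at hcon
    nlinarith
  have hge : (1:ℝ) ≤ t := by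
    have := mul_le_mul_of_nonneg_left hb1 ht0.le
    rw [mul_one] at this
    linarith
  have hle : t ≤ 1 := by
    have h3 := haff 1 0
    have h4 : ((op 1 0 : unitInterval) : ℝ) ≤ 1 := (op 1 0).2.2
    rw [h3, Set.Icc.coe_one, Set.Icc.coe_zero] at h4
    linarith
  have hteq : t = 1 := le_antisymm hle hge
  intro x y
  apply Subtype.ext
  rw [haff x y, hteq]
  ring
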